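/- arXiv:1502.07870 — 3 statements merged into one kernel-verified Lean document; each statement's English description precedes it below -/
import Mathlib

section
/- Every feasible array y[1..n] is the prefix table of some indeterminate string. Concretely, form the graph P on vertices 1..n with an edge (h, i+h−1) for each i ∈ 2..n and each h ∈ 1..y[i]; define x[i] as the set of edges incident with i for non-isolated vertices i, and x[i] = {(i,i)} (a loop) for isolated vertices i. Then the prefix table of x equals y. -/
/-- `x[i..i+ℓ-1]` matches the prefix `x[1..ℓ]` of `x[1..n]` position-wise.  -/
def MatchPref {α : Type*} (x : ℕ → Finset α) (n i ℓ : ℕ) : Prop :=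
  i + ℓ ≤ n + 1 ∧ ∀ h, h < ℓ → ∃ a, a ∈ x (1 + h) ∧ a ∈ x (i + h)

/-- `y` is the prefix table of the (1-indexed) string `x[1..n]`:
for each `i ∈ 1..n`, `y i` is the length of the longest prefix of `x[i..n]`
matching a prefix of `x`. -/
def IsPrefixTable {α : Type*} (x : ℕ → Finset α) (n : ℕ) (y : ℕ → ℕ) : Prop :=
  ∀ i, 1 ≤ i → i ≤ n → MatchPref x n i (y i) ∧ ∀ ℓ, MatchPref x n i ℓ → ℓ ≤ y i

/-- A feasible array `y[1..n]`. -/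
def Feasible (y : ℕ → ℕ) (n : ℕ) : Prop :=
  y 1 = n ∧ ∀ i, 2 ≤ i → i ≤ n → y i ≤ n - i + 1

/-- Positive edges of the prefix graph of `y[1..n]`. -/
def posEdges (y : ℕ → ℕ) (n : ℕ) : Finset (Sym2 ℕ) :=
  (Finset.Icc 2 n).biUnion fun i => (Finset.Icc 1 (y i)).image fun h => s(h, i + h - 1)

/-- Negative edges of the prefix graph of `y[1..n]`. -/
def negEdges (y : ℕ → ℕ) (n : ℕ) : Finset (Sym2 ℕ) :=
  ((Finset.Icc 2 n).filter fun i => i + y i ≤ n).image fun i => s(1 + y i, i + y i)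

/-- The positive subgraph `P⁺` of the prefix graph of `y[1..n]`, as a simple graph. -/
def Pplus (y : ℕ → ℕ) (n : ℕ) : SimpleGraph ℕ where
  Adj a b := a ≠ b ∧ s(a, b) ∈ posEdges y n
  symm := by
    constructor
    rintro a b ⟨h1, h2⟩
    exact ⟨h1.symm, by rwa [Sym2.eq_swap]⟩
  loopless := by constructor; rintro a ⟨h1, _⟩; exact h1 rfl

/-- The string constructed from a feasible array `y[1..n]`: `x[i]` is the set of positive
edges incident with `i` if `i` is non-isolated, and the loop `{(i,i)}` otherwise. -/
def constructedString (y : ℕ → ℕ) (n : ℕ) : ℕ → Finset (Sym2 ℕ) := fun i =>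
  if ((posEdges y n).filter fun e => i ∈ e) = ∅ then {s(i, i)}
  else (posEdges y n).filter fun e => i ∈ e

lemma constructed_nonempty (y : ℕ → ℕ) (n i : ℕ) : (constructedString y n i).Nonempty := by
  unfold constructedString
  split
  · exact ⟨s(i,i), Finset.mem_singleton_self _⟩
  · rename_i h
    exact Finset.nonempty_of_ne_empty h

lemma mem_constructed {y : ℕ → ℕ} {n i : ℕ} {e : Sym2 ℕ}
    (he : e ∈ posEdges y n) (hi : i ∈ e) : e ∈ constructedString y n i := by
  unfold constructedString
  have hmem : e ∈ (posEdges y n).filter fun e => i ∈ e := Finset.mem_filter.2 ⟨he, hi⟩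
  split
  · rename_i h; rw [h] at hmem; exact absurd hmem (Finset.notMem_empty _)
  · exact hmem

lemma shared {y : ℕ → ℕ} {n u v : ℕ} {a : Sym2 ℕ} (huv : u ≠ v)
    (hu : a ∈ constructedString y n u) (hv : a ∈ constructedString y n v) :
    a ∈ posEdges y n ∧ u ∈ a ∧ v ∈ a := by
  unfold constructedString at hu hv
  split at hu
  · rw [Finset.mem_singleton] at hu
    subst hu
    split at hv
    · rw [Finset.mem_singleton] at hv
      rw [Sym2.eq_iff] at hv
      omega
    · rw [Finset.mem_filter] at hv
      have := hv.2
      rw [Sym2.mem_iff] at this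
      omega
  · rw [Finset.mem_filter] at hu
    split at hv
    · rw [Finset.mem_singleton] at hv
      subst hv
      have := hu.2
      rw [Sym2.mem_iff] at this
      omega
    · rw [Finset.mem_filter] at hv
      exact ⟨hu.1, hu.2, hv.2⟩

lemma key_not_mem {y : ℕ → ℕ} {n i : ℕ} (hi : 2 ≤ i) :
    s(1 + y i, i + y i) ∉ posEdges y n := by
  intro h
  rw [posEdges, Finset.mem_biUnion] at h
  obtain ⟨j, hj, hmem⟩ := h
  rw [Finset.mem_image] at hmem
  obtain ⟨h', hh', heq⟩ := hmem
  rw [Finset.mem_Icc] at hj hh'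
  rw [Sym2.eq_iff] at heq
  rcases heq with ⟨e1, e2⟩ | ⟨e1, e2⟩
  · have hji : j = i := by omega
    subst hji
    omega
  · omega

/-- Every feasible array is the prefix table of some indeterminate string; concretely,
of the string built from the incident positive edges (with loops at isolated vertices). -/
theorem feasible_isPrefixTable_constructed (n : ℕ) (y : ℕ → ℕ) (hy : Feasible y n) :
    IsPrefixTable (constructedString y n) n y := by
  obtain ⟨hy1, hy2⟩ := hy
  intro i hi1 hin
  rcases eq_or_lt_of_le hi1 with h1 | h2
  · subst h1
    constructor
    · refine ⟨by omega, ?_⟩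
      intro h _
      obtain ⟨a, ha⟩ := constructed_nonempty y n (1 + h)
      exact ⟨a, ha, ha⟩
    · intro ℓ hℓ
      have := hℓ.1
      omega
  · have hi2 : 2 ≤ i := h2
    have hfeas := hy2 i hi2 hin
    constructor
    · constructor
      · omega
      · intro h hh
        refine ⟨s(1 + h, i + h), ?_, ?_⟩
        · refine mem_constructed ?_ (by rw [Sym2.mem_iff]; left; rfl)
          rw [posEdges, Finset.mem_biUnion]
          refine ⟨i, Finset.mem_Icc.2 ⟨hi2, hin⟩, Finset.mem_image.2 ⟨h + 1, Finset.mem_Icc.2 ⟨by omega, by omega⟩, ?_⟩⟩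
          rw [Sym2.eq_iff]
          left
          omega
        · refine mem_constructed ?_ (by rw [Sym2.mem_iff]; right; rfl)
          rw [posEdges, Finset.mem_biUnion]
          refine ⟨i, Finset.mem_Icc.2 ⟨hi2, hin⟩, Finset.mem_image.2 ⟨h + 1, Finset.mem_Icc.2 ⟨by omega, by omega⟩, ?_⟩⟩
          rw [Sym2.eq_iff]
          left
          omega
    · intro ℓ hℓ
      by_contra hlt
      push_neg at hlt
      obtain ⟨a, ha1, ha2⟩ := hℓ.2 (y i) hlt
      have hne : 1 + y i ≠ i + y i := by omega
      obtain ⟨hE, hu, hv⟩ := shared hne ha1 ha2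
      have haeq : a = s(1 + y i, i + y i) := (Sym2.mem_and_mem_iff hne).1 ⟨hu, hv⟩
      rw [haeq] at hE
      exact key_not_mem hi2 hE
end

section
/- If y is the prefix table of an indeterminate string x and (h,k) is a positive edge of the prefix graph of y, then x[h] ∩ x[k] ≠ ∅; if (p,q) is a negative edge, then x[p] ∩ x[q] = ∅. -/
/-- If `y` is the prefix table of `x`, then the letters at the endpoints of any positive
edge intersect, while the letters at the endpoints of any negative edge are disjoint. -/
theorem posEdges_match_negEdges_mismatch {α : Type*} (n : ℕ) (x : ℕ → Finset α)
    (y : ℕ → ℕ) (hne : ∀ i, 1 ≤ i → i ≤ n → (x i).Nonempty)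
    (hpt : IsPrefixTable x n y) :
    (∀ i h, 2 ≤ i → i ≤ n → 1 ≤ h → h ≤ y i →
      ∃ a, a ∈ x h ∧ a ∈ x (i + h - 1)) ∧
    (∀ i, 2 ≤ i → i ≤ n → i + y i ≤ n →
      ¬ ∃ a, a ∈ x (1 + y i) ∧ a ∈ x (i + y i)) := by
  constructor
  · intro i h h2 hin h1 hy
    obtain ⟨⟨_, hm⟩, _⟩ := hpt i (by omega) hin
    obtain ⟨a, ha1, ha2⟩ := hm (h - 1) (by omega)
    exact ⟨a, by rwa [show 1 + (h - 1) = h by omega] at ha1,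
      by rwa [show i + (h - 1) = i + h - 1 by omega] at ha2⟩
  · rintro i h2 hin hle ⟨a, ha1, ha2⟩
    obtain ⟨⟨hb, hm⟩, hmax⟩ := hpt i (by omega) hin
    have : MatchPref x n i (y i + 1) := by
      refine ⟨by omega, fun h hh => ?_⟩
      rcases Nat.lt_or_ge h (y i) with hlt | hge
      · exact hm h hlt
      · have : h = y i := by omega
        subst this
        exact ⟨a, ha1, ha2⟩
    have := hmax _ this
    omega
end

section
/- Suppose the prefix graph of a feasible array y contains a 'triangle' i₁, j, i₂ with (i₁,j) ∈ E⁺, (i₂,j) ∈ E⁺, and (i₁,i₂) ∈ E⁻. Then no regular string has prefix table y; i.e., any string x with π_x = y must be indeterminate (some x[i] has at least two elements). -/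
/-- If the prefix graph of a feasible array `y` contains a triangle `i₁, j, i₂` with
`(i₁,j), (i₂,j) ∈ E⁺` and `(i₁,i₂) ∈ E⁻`, then every string with prefix table `y` is
indeterminate: some letter has at least two elements. -/
theorem triangle_forces_indeterminate (n : ℕ) (y : ℕ → ℕ) (hy : Feasible y n)
    (i₁ j i₂ : ℕ)
    (h1 : s(i₁, j) ∈ posEdges y n) (h2 : s(i₂, j) ∈ posEdges y n)
    (h3 : s(i₁, i₂) ∈ negEdges y n) :
    ∀ (α : Type) (x : ℕ → Finset α),
      (∀ i, 1 ≤ i → i ≤ n → (x i).Nonempty) → IsPrefixTable x n y →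
      ∃ i, 1 ≤ i ∧ i ≤ n ∧ 2 ≤ (x i).card := by
  intro α x hne hpt
  by_contra hcon
  push_neg at hcon
  -- Positive edges force matching (nonempty intersection), with endpoints in range.
  have pos : ∀ a b : ℕ, s(a, b) ∈ posEdges y n →
      (∃ c, c ∈ x a ∧ c ∈ x b) ∧ 1 ≤ a ∧ a ≤ n ∧ 1 ≤ b ∧ b ≤ n := by
    intro a b hab
    simp only [posEdges, Finset.mem_biUnion, Finset.mem_image, Finset.mem_Icc] at hab
    obtain ⟨i, ⟨hi2, hin⟩, h, ⟨hh1, hhy⟩, heq⟩ := hab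
    have hiub : h ≤ n - i + 1 := le_trans hhy (hy.2 i hi2 hin)
    obtain ⟨c, hc1, hc2⟩ := (hpt i (by omega) hin).1.2 (h - 1) (by omega)
    have e1 : 1 + (h - 1) = h := by omega
    have e2 : i + (h - 1) = i + h - 1 := by omega
    rw [e1] at hc1
    rw [e2] at hc2
    rw [Sym2.eq_iff] at heq
    rcases heq with ⟨rfl, rfl⟩ | ⟨rfl, rfl⟩
    · exact ⟨⟨c, hc1, hc2⟩, by omega, by omega, by omega, by omega⟩
    · exact ⟨⟨c, hc2, hc1⟩, by omega, by omega, by omega, by omega⟩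
  -- The negative edge forces a mismatch between positions i₁ and i₂.
  have neg : ∀ c, c ∈ x i₁ → c ∉ x i₂ := by
    intro c hc1 hc2
    simp only [negEdges, Finset.mem_image, Finset.mem_filter, Finset.mem_Icc] at h3
    obtain ⟨i, ⟨⟨hi2, hin⟩, hsum⟩, heq⟩ := h3
    have hmp := hpt i (by omega) hin
    have hlong : MatchPref x n i (y i + 1) := by
      refine ⟨by omega, ?_⟩
      intro h hh
      rcases Nat.lt_succ_iff_lt_or_eq.mp hh with hlt | rfl
      · exact hmp.1.2 h hlt
      · rw [Sym2.eq_iff] at heq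
        rcases heq with ⟨e1, e2⟩ | ⟨e1, e2⟩
        · exact ⟨c, by rw [e1]; exact hc1, by rw [e2]; exact hc2⟩
        · exact ⟨c, by rw [e1]; exact hc2, by rw [e2]; exact hc1⟩
    have := hmp.2 _ hlong
    omega
  obtain ⟨⟨c₁, hc₁a, hc₁b⟩, _, _, hj1, hjn⟩ := pos i₁ j h1
  obtain ⟨⟨c₂, hc₂a, hc₂b⟩, _⟩ := pos i₂ j h2
  have hcard : (x j).card ≤ 1 := by have := hcon j hj1 hjn; omega
  have hcc : c₁ = c₂ := Finset.card_le_one.mp hcard _ hc₁b _ hc₂b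
  exact neg c₁ hc₁a (by rw [hcc]; exact hc₂a)
end
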